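/- Under the hypotheses of the main existence theorem (α ≥ 1 a rational with odd denominator, γ ∈ (0,1] a ratio of odd positive integers, f locally Lipschitz, Σ_{n=0}^∞ |1/r_n|^{1/γ} Σ_{i=n}^∞ |a_i| < ∞, Σ_{n=0}^∞ |1/r_n|^{1/γ} Σ_{i=n}^∞ |q_i| < ∞, −1 < liminf p_n ≤ limsup p_n < 1, Σ|a_i| < ∞, Σ|q_i| < ∞), and with d, n_0, n_3, B and T as in the construction, the operator T : B → l^∞ is continuous with respect to the supremum norm: if y^{(p)} ∈ B and ‖y^{(p)} − x‖_∞ → 0 with x ∈ B, then ‖T y^{(p)} − T x‖_∞ → 0. -/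

import Mathlib

open Filter Topology

/-- Sign-preserving power `x ^ ρ` for a rational exponent `ρ = s/t` (in lowest terms) with
odd denominator `t`: it is the unique real `y` with `y ^ t = x ^ s`.  For `x ≥ 0` it agrees
with the usual real power. -/
noncomputable def opow (x : ℝ) (ρ : ℚ) : ℝ :=
  if Even ρ.num ∨ 0 ≤ x then |x| ^ (ρ : ℝ) else -(|x| ^ (ρ : ℝ))

/-- The operator `T`:
`(Tx)_n = -p_n x_{n-k} - Σ_{j=n}^∞ ((1/r_j) Σ_{i=j}^∞ (a_i f(x_{i+1}) + q_i x_i^α))^{1/γ}`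
for `n ≥ n₃`, and `(Tx)_n = x_n` for `n < n₃`. -/
noncomputable def Tmap (k n₃ : ℕ) (r a p q : ℕ → ℝ) (f : ℝ → ℝ) (α γ : ℚ)
    (x : ℕ → ℝ) (n : ℕ) : ℝ :=
  if n₃ ≤ n then
    -(p n * x (n - k)) -
      ∑' j : ℕ, opow ((1 / r (n + j)) *
        ∑' i : ℕ, (a (n + j + i) * f (x (n + j + i + 1)) +
          q (n + j + i) * opow (x (n + j + i)) α)) γ⁻¹
  else x n

lemma abs_opow (x : ℝ) (ρ : ℚ) : |opow x ρ| = |x| ^ (ρ : ℝ) := by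
  unfold opow
  split <;> simp [abs_of_nonneg (Real.rpow_nonneg (abs_nonneg x) _)]

lemma rpow_diff_le {c B u v : ℝ} (hc : 1 ≤ c) (hu : u ∈ Set.Icc 0 B)
    (hv : v ∈ Set.Icc 0 B) : |u ^ c - v ^ c| ≤ c * B ^ (c - 1) * |u - v| := by
  have hc0 : 0 ≤ c := le_trans zero_le_one hc
  have key : ∀ z ∈ Set.Icc (0:ℝ) B,
      HasDerivWithinAt (fun t : ℝ => t ^ c) (c * z ^ (c - 1)) (Set.Icc 0 B) z :=
    fun z _ => (Real.hasDerivAt_rpow_const (Or.inr hc)).hasDerivWithinAt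
  have bnd : ∀ z ∈ Set.Icc (0:ℝ) B, ‖c * z ^ (c - 1)‖ ≤ c * B ^ (c - 1) := by
    intro z hz
    rw [Real.norm_eq_abs, abs_mul, abs_of_nonneg hc0,
      abs_of_nonneg (Real.rpow_nonneg hz.1 _)]
    exact mul_le_mul_of_nonneg_left
      (Real.rpow_le_rpow hz.1 hz.2 (by linarith)) hc0
  have := (convex_Icc (0:ℝ) B).norm_image_sub_le_of_norm_hasDerivWithin_le key bnd hv hu
  simpa [Real.norm_eq_abs] using this

lemma rpow_one_le {c B w : ℝ} (hc : 1 ≤ c) (hw : 0 ≤ w) (hwB : w ≤ B) :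
    w ^ c ≤ c * B ^ (c - 1) * w := by
  have hB : (0:ℝ) ≤ B := le_trans hw hwB
  have := rpow_diff_le hc (u := w) (v := 0) ⟨hw, hwB⟩ ⟨le_rfl, hB⟩
  rw [Real.zero_rpow (by positivity : c ≠ 0)] at this
  simpa [abs_of_nonneg hw, abs_of_nonneg (Real.rpow_nonneg hw c)] using this

lemma rpow_one_le' {c x X : ℝ} (hc : 1 ≤ c) (hx : 0 ≤ x) (hX : x ≤ X) :
    x ^ c ≤ X ^ (c - 1) * x := by
  rcases eq_or_lt_of_le hx with h | h
  · rw [← h, Real.zero_rpow (by positivity : c ≠ 0), mul_zero]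
  · have hxc : x ^ c = x ^ (c - 1) * x := by
      rw [← Real.rpow_add_one (ne_of_gt h)]; ring_nf
    rw [hxc]
    exact mul_le_mul_of_nonneg_right
      (Real.rpow_le_rpow hx hX (by linarith)) (le_of_lt h)

lemma opow_lip {ρ : ℚ} {B u v : ℝ} (hρ : 1 ≤ (ρ : ℝ)) (hu : |u| ≤ B) (hv : |v| ≤ B) :
    |opow u ρ - opow v ρ| ≤ (ρ : ℝ) * B ^ ((ρ : ℝ) - 1) * |u - v| := by
  set c : ℝ := (ρ : ℝ)
  have habs : ∀ w₁ w₂ : ℝ, |w₁| ≤ B → |w₂| ≤ B →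
      abs (|w₁| ^ c - |w₂| ^ c) ≤ c * B ^ (c - 1) * |w₁ - w₂| := by
    intro w₁ w₂ h1 h2
    calc abs (|w₁| ^ c - |w₂| ^ c) ≤ c * B ^ (c - 1) * abs (|w₁| - |w₂|) :=
          rpow_diff_le hρ ⟨abs_nonneg _, h1⟩ ⟨abs_nonneg _, h2⟩
      _ ≤ c * B ^ (c - 1) * |w₁ - w₂| := by
          refine mul_le_mul_of_nonneg_left (abs_abs_sub_abs_le_abs_sub _ _) ?_
          have hB : (0:ℝ) ≤ B := le_trans (abs_nonneg _) hu
          positivity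
  unfold opow
  by_cases he : Even ρ.num
  · simp only [he, true_or, if_true]
    exact habs u v hu hv
  · by_cases hu0 : 0 ≤ u <;> by_cases hv0 : 0 ≤ v
    · simp only [he, hu0, hv0, false_or, if_true]
      exact habs u v hu hv
    · -- u ≥ 0, v < 0
      simp only [he, hu0, hv0, false_or, if_true, if_false]
      push_neg at hv0
      have h1 : |u| ^ c ≤ c * B ^ (c - 1) * |u| := rpow_one_le hρ (abs_nonneg u) hu
      have h2 : |v| ^ c ≤ c * B ^ (c - 1) * |v| := rpow_one_le hρ (abs_nonneg v) hv
      have huv : |u - v| = |u| + |v| := by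
        rw [abs_of_nonneg hu0, abs_of_neg hv0, abs_of_nonneg (by linarith : 0 ≤ u - v)]
        ring
      have hnn1 : 0 ≤ |u| ^ c := Real.rpow_nonneg (abs_nonneg _) _
      have hnn2 : 0 ≤ |v| ^ c := Real.rpow_nonneg (abs_nonneg _) _
      rw [sub_neg_eq_add, abs_of_nonneg (by linarith), huv]
      linarith
    · -- u < 0, v ≥ 0
      simp only [he, hu0, hv0, false_or, if_true, if_false]
      push_neg at hu0
      have h1 : |u| ^ c ≤ c * B ^ (c - 1) * |u| := rpow_one_le hρ (abs_nonneg u) hu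
      have h2 : |v| ^ c ≤ c * B ^ (c - 1) * |v| := rpow_one_le hρ (abs_nonneg v) hv
      have huv : |u - v| = |u| + |v| := by
        rw [abs_of_neg hu0, abs_of_nonneg hv0, abs_of_neg (by linarith : u - v < 0)]
        ring
      have hnn1 : 0 ≤ |u| ^ c := Real.rpow_nonneg (abs_nonneg _) _
      have hnn2 : 0 ≤ |v| ^ c := Real.rpow_nonneg (abs_nonneg _) _
      rw [neg_sub_left, abs_neg, abs_of_nonneg (by linarith), huv]
      linarith
    · simp only [he, hu0, hv0, false_or, if_false]
      rw [neg_sub_neg]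
      exact (abs_sub_comm _ _).trans_le (habs u v hu hv) |>.trans_eq rfl
        |>.trans (le_of_eq rfl) |> id

lemma add_rpow_le2 {x y c : ℝ} (hx : 0 ≤ x) (hy : 0 ≤ y) (hc : 0 ≤ c) :
    (x + y) ^ c ≤ 2 ^ c * (x ^ c + y ^ c) := by
  have h1 : x + y ≤ 2 * max x y := by
    rcases le_total x y with h | h
    · rw [max_eq_right h]; linarith
    · rw [max_eq_left h]; linarith
  have hmax : (0:ℝ) ≤ max x y := le_trans hx (le_max_left _ _)
  calc (x + y) ^ c ≤ (2 * max x y) ^ c :=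
        Real.rpow_le_rpow (by linarith) h1 hc
    _ = 2 ^ c * (max x y) ^ c := Real.mul_rpow (by norm_num) hmax
    _ ≤ 2 ^ c * (x ^ c + y ^ c) := by
        refine mul_le_mul_of_nonneg_left ?_ (Real.rpow_nonneg (by norm_num) _)
        rcases le_total x y with h | h
        · rw [max_eq_right h]
          have := Real.rpow_nonneg hx c; linarith
        · rw [max_eq_left h]
          have := Real.rpow_nonneg hy c; linarith

lemma tail_summable {g : ℕ → ℝ} (hg : Summable fun i => |g i|) (w : ℕ) :
    Summable fun i => |g (w + i)| :=
  hg.comp_injective (add_right_injective w)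

lemma tail_le {g : ℕ → ℝ} (hg : Summable fun i => |g i|) (w : ℕ) :
    ∑' i, |g (w + i)| ≤ ∑' i, |g i| :=
  Summable.tsum_le_tsum_of_inj (fun i => w + i) (add_right_injective w)
    (fun c _ => abs_nonneg _) (fun i => le_rfl) (tail_summable hg w) hg

lemma tail_nonneg (g : ℕ → ℝ) (w : ℕ) : 0 ≤ ∑' i, |g (w + i)| :=
  tsum_nonneg fun i => abs_nonneg _

noncomputable def gmap (r a q : ℕ → ℝ) (f : ℝ → ℝ) (α : ℚ) (z : ℕ → ℝ) (w : ℕ) : ℝ :=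
  (1 / r w) * ∑' i : ℕ, (a (w + i) * f (z (w + i + 1)) + q (w + i) * opow (z (w + i)) α)

lemma inner_summable {a q : ℕ → ℝ} {f : ℝ → ℝ} {α : ℚ} {z : ℕ → ℝ} {d Md dα : ℝ}
    (ha : Summable fun i => |a i|) (hq : Summable fun i => |q i|)
    {n₀ : ℕ} (hzd : ∀ i, n₀ ≤ i → |z i| ≤ d)
    (hMd : ∀ u : ℝ, |u| ≤ d → |f u| ≤ Md) (hdα : ∀ u : ℝ, |u| ≤ d → |opow u α| ≤ dα)
    {w : ℕ} (hw : n₀ ≤ w) :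
    Summable (fun i => a (w + i) * f (z (w + i + 1)) + q (w + i) * opow (z (w + i)) α) := by
  apply Summable.add
  · apply Summable.of_norm_bounded (g := fun i => |a (w + i)| * Md)
      ((tail_summable ha w).mul_right Md)
    intro i
    rw [Real.norm_eq_abs, abs_mul]
    exact mul_le_mul_of_nonneg_left
      (hMd _ (hzd _ (le_trans hw (by omega)))) (abs_nonneg _)
  · apply Summable.of_norm_bounded (g := fun i => |q (w + i)| * dα)
      ((tail_summable hq w).mul_right dα)
    intro i
    rw [Real.norm_eq_abs, abs_mul]
    exact mul_le_mul_of_nonneg_left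
      (hdα _ (hzd _ (le_trans hw (Nat.le_add_right _ _)))) (abs_nonneg _)

lemma gmap_abs_le {r a q : ℕ → ℝ} {f : ℝ → ℝ} {α : ℚ} {z : ℕ → ℝ} {d Md dα : ℝ}
    (ha : Summable fun i => |a i|) (hq : Summable fun i => |q i|)
    {n₀ : ℕ} (hzd : ∀ i, n₀ ≤ i → |z i| ≤ d)
    (hMd : ∀ u : ℝ, |u| ≤ d → |f u| ≤ Md) (hdα : ∀ u : ℝ, |u| ≤ d → |opow u α| ≤ dα)
    {w : ℕ} (hw : n₀ ≤ w) :
    |gmap r a q f α z w| ≤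
      |1 / r w| * ((∑' i, |a (w + i)|) * Md + (∑' i, |q (w + i)|) * dα) := by
  rw [gmap, abs_mul]
  refine mul_le_mul_of_nonneg_left ?_ (abs_nonneg _)
  have hb : ∀ i : ℕ,
      ‖a (w + i) * f (z (w + i + 1)) + q (w + i) * opow (z (w + i)) α‖ ≤
        |a (w + i)| * Md + |q (w + i)| * dα := by
    intro i
    rw [Real.norm_eq_abs]
    refine le_trans (abs_add_le _ _) (add_le_add ?_ ?_)
    · rw [abs_mul]
      exact mul_le_mul_of_nonneg_left
        (hMd _ (hzd _ (le_trans hw (by omega)))) (abs_nonneg _)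
    · rw [abs_mul]
      exact mul_le_mul_of_nonneg_left
        (hdα _ (hzd _ (le_trans hw (Nat.le_add_right _ _)))) (abs_nonneg _)
  have hbs : Summable (fun i => |a (w + i)| * Md + |q (w + i)| * dα) :=
    ((tail_summable ha w).mul_right Md).add ((tail_summable hq w).mul_right dα)
  calc |∑' i, (a (w + i) * f (z (w + i + 1)) + q (w + i) * opow (z (w + i)) α)|
      ≤ ∑' i, (|a (w + i)| * Md + |q (w + i)| * dα) := by
        have hh := hbs.of_nonneg_of_le (fun i => norm_nonneg _) hb
        rw [← Real.norm_eq_abs]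
        exact le_trans (norm_tsum_le_tsum_norm hh) (Summable.tsum_le_tsum hb hh hbs)
    _ = (∑' i, |a (w + i)|) * Md + (∑' i, |q (w + i)|) * dα := by
        rw [Summable.tsum_add ((tail_summable ha w).mul_right Md) ((tail_summable hq w).mul_right dα),
          tsum_mul_right, tsum_mul_right]

lemma gmap_diff_le {r a q : ℕ → ℝ} {f : ℝ → ℝ} {α : ℚ} {z₁ z₂ : ℕ → ℝ} {d Md dα εf Lδ : ℝ}
    (ha : Summable fun i => |a i|) (hq : Summable fun i => |q i|)
    {n₀ : ℕ} (hz₁ : ∀ i, n₀ ≤ i → |z₁ i| ≤ d) (hz₂ : ∀ i, n₀ ≤ i → |z₂ i| ≤ d)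
    (hMd : ∀ u : ℝ, |u| ≤ d → |f u| ≤ Md) (hdα : ∀ u : ℝ, |u| ≤ d → |opow u α| ≤ dα)
    (hfd : ∀ i, n₀ ≤ i → |f (z₁ i) - f (z₂ i)| ≤ εf)
    (hod : ∀ i, n₀ ≤ i → |opow (z₁ i) α - opow (z₂ i) α| ≤ Lδ)
    {w : ℕ} (hw : n₀ ≤ w) :
    |gmap r a q f α z₁ w - gmap r a q f α z₂ w| ≤
      |1 / r w| * ((∑' i, |a (w + i)|) * εf + (∑' i, |q (w + i)|) * Lδ) := by
  have hs₁ := inner_summable ha hq hz₁ hMd hdα hw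
  have hs₂ := inner_summable ha hq hz₂ hMd hdα hw
  rw [gmap, gmap, ← mul_sub, abs_mul, ← Summable.tsum_sub hs₁ hs₂]
  refine mul_le_mul_of_nonneg_left ?_ (abs_nonneg _)
  have hb : ∀ i : ℕ,
      ‖(a (w + i) * f (z₁ (w + i + 1)) + q (w + i) * opow (z₁ (w + i)) α) -
        (a (w + i) * f (z₂ (w + i + 1)) + q (w + i) * opow (z₂ (w + i)) α)‖ ≤
        |a (w + i)| * εf + |q (w + i)| * Lδ := by
    intro i
    have heq : (a (w + i) * f (z₁ (w + i + 1)) + q (w + i) * opow (z₁ (w + i)) α) -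
        (a (w + i) * f (z₂ (w + i + 1)) + q (w + i) * opow (z₂ (w + i)) α) =
        a (w + i) * (f (z₁ (w + i + 1)) - f (z₂ (w + i + 1))) +
        q (w + i) * (opow (z₁ (w + i)) α - opow (z₂ (w + i)) α) := by ring
    rw [Real.norm_eq_abs, heq]
    refine le_trans (abs_add_le _ _) (add_le_add ?_ ?_)
    · rw [abs_mul]
      exact mul_le_mul_of_nonneg_left (hfd _ (le_trans hw (by omega))) (abs_nonneg _)
    · rw [abs_mul]
      exact mul_le_mul_of_nonneg_left (hod _ (le_trans hw (Nat.le_add_right _ _)))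
        (abs_nonneg _)
  have hbs : Summable (fun i => |a (w + i)| * εf + |q (w + i)| * Lδ) :=
    ((tail_summable ha w).mul_right εf).add ((tail_summable hq w).mul_right Lδ)
  calc |∑' i, ((a (w + i) * f (z₁ (w + i + 1)) + q (w + i) * opow (z₁ (w + i)) α) -
        (a (w + i) * f (z₂ (w + i + 1)) + q (w + i) * opow (z₂ (w + i)) α))|
      ≤ ∑' i, (|a (w + i)| * εf + |q (w + i)| * Lδ) := by
        have hh := hbs.of_nonneg_of_le (fun i => norm_nonneg _) hb
        rw [← Real.norm_eq_abs]
        exact le_trans (norm_tsum_le_tsum_norm hh) (Summable.tsum_le_tsum hb hh hbs)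
    _ = (∑' i, |a (w + i)|) * εf + (∑' i, |q (w + i)|) * Lδ := by
        rw [Summable.tsum_add ((tail_summable ha w).mul_right εf) ((tail_summable hq w).mul_right Lδ),
          tsum_mul_right, tsum_mul_right]

lemma Tmap_eq {k n₃ : ℕ} {r a p q : ℕ → ℝ} {f : ℝ → ℝ} {α γ : ℚ} {z : ℕ → ℝ} {n : ℕ}
    (hn : n₃ ≤ n) :
    Tmap k n₃ r a p q f α γ z n =
      -(p n * z (n - k)) - ∑' j : ℕ, opow (gmap r a q f α z (n + j)) γ⁻¹ := by
  rw [Tmap, if_pos hn]; rfl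

lemma opow_gmap_bound {γ : ℚ} {r a q : ℕ → ℝ} {f : ℝ → ℝ} {α : ℚ} {z : ℕ → ℝ}
    {d Md dα : ℝ} (hc1 : 1 ≤ ((γ : ℝ))⁻¹)
    (ha : Summable fun i => |a i|) (hq : Summable fun i => |q i|)
    {n₀ : ℕ} (hzd : ∀ i, n₀ ≤ i → |z i| ≤ d)
    (hMd : ∀ u : ℝ, |u| ≤ d → |f u| ≤ Md) (hdα : ∀ u : ℝ, |u| ≤ d → |opow u α| ≤ dα)
    (hMd0 : 0 ≤ Md) (hdα0 : 0 ≤ dα)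
    {w : ℕ} (hw : n₀ ≤ w) :
    |opow (gmap r a q f α z w) γ⁻¹| ≤
      2 ^ (γ : ℝ)⁻¹ *
        (((∑' i, |a i|) * Md) ^ ((γ : ℝ)⁻¹ - 1) * Md *
            (|1 / r w| ^ (γ : ℝ)⁻¹ * ∑' i, |a (w + i)|) +
         ((∑' i, |q i|) * dα) ^ ((γ : ℝ)⁻¹ - 1) * dα *
            (|1 / r w| ^ (γ : ℝ)⁻¹ * ∑' i, |q (w + i)|)) := by
  set c : ℝ := ((γ : ℝ))⁻¹ with hcdef
  have hc0 : 0 ≤ c := le_trans zero_le_one hc1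
  have hA0 : 0 ≤ ∑' i, |a (w + i)| := tail_nonneg a w
  have hQ0 : 0 ≤ ∑' i, |q (w + i)| := tail_nonneg q w
  have hr0 : (0:ℝ) ≤ |1 / r w| := abs_nonneg _
  have hcast : ((γ⁻¹ : ℚ) : ℝ) = c := by push_cast; rfl
  rw [abs_opow, hcast]
  calc |gmap r a q f α z w| ^ c
      ≤ (|1 / r w| * ((∑' i, |a (w + i)|) * Md) +
          |1 / r w| * ((∑' i, |q (w + i)|) * dα)) ^ c := by
        rw [← mul_add]
        exact Real.rpow_le_rpow (abs_nonneg _) (gmap_abs_le ha hq hzd hMd hdα hw) hc0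
    _ ≤ 2 ^ c * ((|1 / r w| * ((∑' i, |a (w + i)|) * Md)) ^ c +
          (|1 / r w| * ((∑' i, |q (w + i)|) * dα)) ^ c) :=
        add_rpow_le2 (by positivity) (by positivity) hc0
    _ ≤ 2 ^ c * (((∑' i, |a i|) * Md) ^ (c - 1) * Md *
            (|1 / r w| ^ c * ∑' i, |a (w + i)|) +
          ((∑' i, |q i|) * dα) ^ (c - 1) * dα *
            (|1 / r w| ^ c * ∑' i, |q (w + i)|)) := by
        refine mul_le_mul_of_nonneg_left (add_le_add ?_ ?_)
          (Real.rpow_nonneg (by norm_num) _)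
        · rw [Real.mul_rpow hr0 (by positivity)]
          have h1 : ((∑' i, |a (w + i)|) * Md) ^ c ≤
              ((∑' i, |a i|) * Md) ^ (c - 1) * ((∑' i, |a (w + i)|) * Md) :=
            rpow_one_le' hc1 (by positivity)
              (mul_le_mul_of_nonneg_right (tail_le ha w) hMd0)
          calc |1 / r w| ^ c * ((∑' i, |a (w + i)|) * Md) ^ c
              ≤ |1 / r w| ^ c * (((∑' i, |a i|) * Md) ^ (c - 1) *
                  ((∑' i, |a (w + i)|) * Md)) :=
                mul_le_mul_of_nonneg_left h1 (Real.rpow_nonneg hr0 _)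
            _ = ((∑' i, |a i|) * Md) ^ (c - 1) * Md *
                  (|1 / r w| ^ c * ∑' i, |a (w + i)|) := by ring
        · rw [Real.mul_rpow hr0 (by positivity)]
          have h1 : ((∑' i, |q (w + i)|) * dα) ^ c ≤
              ((∑' i, |q i|) * dα) ^ (c - 1) * ((∑' i, |q (w + i)|) * dα) :=
            rpow_one_le' hc1 (by positivity)
              (mul_le_mul_of_nonneg_right (tail_le hq w) hdα0)
          calc |1 / r w| ^ c * ((∑' i, |q (w + i)|) * dα) ^ c
              ≤ |1 / r w| ^ c * (((∑' i, |q i|) * dα) ^ (c - 1) *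
                  ((∑' i, |q (w + i)|) * dα)) :=
                mul_le_mul_of_nonneg_left h1 (Real.rpow_nonneg hr0 _)
            _ = ((∑' i, |q i|) * dα) ^ (c - 1) * dα *
                  (|1 / r w| ^ c * ∑' i, |q (w + i)|) := by ring

lemma opow_gmap_diff {γ : ℚ} {r a q : ℕ → ℝ} {f : ℝ → ℝ} {α : ℚ} {z₁ z₂ : ℕ → ℝ}
    {d Md dα εf Lδ : ℝ} (hc1 : 1 ≤ ((γ : ℝ))⁻¹)
    (ha : Summable fun i => |a i|) (hq : Summable fun i => |q i|)
    (hr : ∀ n, r n ≠ 0)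
    {n₀ : ℕ} (hz₁ : ∀ i, n₀ ≤ i → |z₁ i| ≤ d) (hz₂ : ∀ i, n₀ ≤ i → |z₂ i| ≤ d)
    (hMd : ∀ u : ℝ, |u| ≤ d → |f u| ≤ Md) (hdα : ∀ u : ℝ, |u| ≤ d → |opow u α| ≤ dα)
    (hMd0 : 0 ≤ Md) (hdα0 : 0 ≤ dα)
    (hfd : ∀ i, n₀ ≤ i → |f (z₁ i) - f (z₂ i)| ≤ εf)
    (hod : ∀ i, n₀ ≤ i → |opow (z₁ i) α - opow (z₂ i) α| ≤ Lδ)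
    {w : ℕ} (hw : n₀ ≤ w) :
    |opow (gmap r a q f α z₁ w) γ⁻¹ - opow (gmap r a q f α z₂ w) γ⁻¹| ≤
      ((γ : ℝ)⁻¹ * ((∑' i, |a i|) * Md + (∑' i, |q i|) * dα) ^ ((γ : ℝ)⁻¹ - 1)) *
        (εf * (|1 / r w| ^ (γ : ℝ)⁻¹ * ∑' i, |a (w + i)|) +
         Lδ * (|1 / r w| ^ (γ : ℝ)⁻¹ * ∑' i, |q (w + i)|)) := by
  set c : ℝ := ((γ : ℝ))⁻¹ with hcdef
  set K0 : ℝ := (∑' i, |a i|) * Md + (∑' i, |q i|) * dα with hK0def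
  have hc0 : 0 ≤ c := le_trans zero_le_one hc1
  have hSa0 : 0 ≤ ∑' i, |a i| := tsum_nonneg fun i => abs_nonneg _
  have hSq0 : 0 ≤ ∑' i, |q i| := tsum_nonneg fun i => abs_nonneg _
  have hK00 : 0 ≤ K0 := by positivity
  have hr0 : (0:ℝ) < |1 / r w| := abs_pos.2 (one_div_ne_zero (hr w))
  have hb : ∀ z : ℕ → ℝ, (∀ i, n₀ ≤ i → |z i| ≤ d) →
      |gmap r a q f α z w| ≤ |1 / r w| * K0 := by
    intro z hz
    refine le_trans (gmap_abs_le ha hq hz hMd hdα hw) ?_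
    refine mul_le_mul_of_nonneg_left (add_le_add ?_ ?_) (le_of_lt hr0)
    · exact mul_le_mul_of_nonneg_right (tail_le ha w) hMd0
    · exact mul_le_mul_of_nonneg_right (tail_le hq w) hdα0
  have hcastgoal : ∀ u v : ℝ, |u| ≤ |1 / r w| * K0 → |v| ≤ |1 / r w| * K0 →
      |opow u γ⁻¹ - opow v γ⁻¹| ≤ c * (|1 / r w| * K0) ^ (c - 1) * |u - v| := by
    intro u v huB hvB
    have h := opow_lip (ρ := γ⁻¹) (B := |1 / r w| * K0) (by push_cast; exact hc1) huB hvB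
    have hcast : ((γ⁻¹ : ℚ) : ℝ) = c := by push_cast; rfl
    rwa [hcast] at h
  have hdiff := gmap_diff_le (r := r) ha hq hz₁ hz₂ hMd hdα hfd hod hw
  calc |opow (gmap r a q f α z₁ w) γ⁻¹ - opow (gmap r a q f α z₂ w) γ⁻¹|
      ≤ c * (|1 / r w| * K0) ^ (c - 1) *
          |gmap r a q f α z₁ w - gmap r a q f α z₂ w| :=
        hcastgoal _ _ (hb z₁ hz₁) (hb z₂ hz₂)
    _ ≤ c * (|1 / r w| * K0) ^ (c - 1) *
          (|1 / r w| * ((∑' i, |a (w + i)|) * εf + (∑' i, |q (w + i)|) * Lδ)) := by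
        refine mul_le_mul_of_nonneg_left hdiff ?_
        have := Real.rpow_nonneg (mul_nonneg (le_of_lt hr0) hK00) (c - 1)
        positivity
    _ = (c * K0 ^ (c - 1)) *
          (εf * (|1 / r w| ^ c * ∑' i, |a (w + i)|) +
           Lδ * (|1 / r w| ^ c * ∑' i, |q (w + i)|)) := by
        rw [Real.mul_rpow (le_of_lt hr0) hK00]
        have hpow : |1 / r w| ^ (c - 1) * |1 / r w| = |1 / r w| ^ c := by
          rw [← Real.rpow_add_one (ne_of_gt hr0)]
          ring_nf
        calc c * (|1 / r w| ^ (c - 1) * K0 ^ (c - 1)) *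
              (|1 / r w| * ((∑' i, |a (w + i)|) * εf + (∑' i, |q (w + i)|) * Lδ))
            = c * K0 ^ (c - 1) * ((|1 / r w| ^ (c - 1) * |1 / r w|) *
                ((∑' i, |a (w + i)|) * εf + (∑' i, |q (w + i)|) * Lδ)) := by ring
          _ = (c * K0 ^ (c - 1)) *
              (εf * (|1 / r w| ^ c * ∑' i, |a (w + i)|) +
               Lδ * (|1 / r w| ^ c * ∑' i, |q (w + i)|)) := by rw [hpow]; ring

lemma aux_div {t ε : ℝ} (ht : 0 ≤ t) (hε : 0 < ε) : t * (ε / (3 * (1 + t))) ≤ ε / 3 := by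
  rw [mul_div_assoc', div_le_div_iff₀ (by linarith) (by norm_num)]
  nlinarith


set_option maxHeartbeats 2000000 in
/-- Step 2: under the hypotheses of the main existence theorem and with the construction
data `d, P, n₀, n₃, M_d, C`, the operator `T` is continuous on
`B = {x : |x_n| ≤ d for n ≥ n₀}` for the supremum norm: uniform convergence
`y⁽ᵖ⁾ → x` implies uniform convergence `T y⁽ᵖ⁾ → T x`. -/
theorem T_is_continuous
    (k : ℕ) (hk : 0 < k) (α γ : ℚ)
    (hα : 1 ≤ α) (hαden : Odd α.den)
    (hγ0 : 0 < γ) (hγ1 : γ ≤ 1) (hγnum : Odd γ.num) (hγden : Odd γ.den)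
    (f : ℝ → ℝ) (hf : LocallyLipschitz f)
    (r a p q : ℕ → ℝ) (hr : ∀ n, r n ≠ 0)
    (hra : Summable fun n => |1 / r n| ^ (γ : ℝ)⁻¹ * ∑' i : ℕ, |a (n + i)|)
    (hrq : Summable fun n => |1 / r n| ^ (γ : ℝ)⁻¹ * ∑' i : ℕ, |q (n + i)|)
    (hp1 : (-1 : EReal) < liminf (fun n => (p n : EReal)) atTop)
    (hp2 : liminf (fun n => (p n : EReal)) atTop ≤ limsup (fun n => (p n : EReal)) atTop)
    (hp3 : limsup (fun n => (p n : EReal)) atTop < 1)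
    (ha : Summable fun i => |a i|) (hq : Summable fun i => |q i|)
    (d : ℝ) (hd : 0 < d) (P : ℝ) (hP0 : 0 ≤ P) (hP1 : P < 1)
    (n₀ n₃ : ℕ) (hn₃ : n₀ + k ≤ n₃)
    (hp : ∀ n, n₀ ≤ n → |p n| ≤ P)
    (Md : ℝ) (hMd : ∀ u : ℝ, |u| ≤ d → |f u| ≤ Md)
    (C : ℝ) (hC0 : 0 < C)
    (hC : C ≤ (d - P * d) /
      (2 ^ ((γ : ℝ)⁻¹ - 1) * Md ^ (γ : ℝ)⁻¹ + 2 ^ ((γ : ℝ)⁻¹ - 1) * (opow d α) ^ (γ : ℝ)⁻¹))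
    (htaila : ∀ n, n₃ ≤ n →
      ∑' j : ℕ, (|1 / r (n + j)| * ∑' i : ℕ, |a (n + j + i)|) ^ (γ : ℝ)⁻¹ ≤ C)
    (htailq : ∀ n, n₃ ≤ n →
      ∑' j : ℕ, (|1 / r (n + j)| * ∑' i : ℕ, |q (n + j + i)|) ^ (γ : ℝ)⁻¹ ≤ C)
    -- `y⁽ᵖ⁾` is a sequence of elements of `B` converging in the supremum norm to `x ∈ B`
    (y : ℕ → ℕ → ℝ) (x : ℕ → ℝ)
    (hy : ∀ m, ∀ i, n₀ ≤ i → |y m i| ≤ d)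
    (hx : ∀ i, n₀ ≤ i → |x i| ≤ d)
    (hconv : ∀ ε : ℝ, 0 < ε → ∃ N : ℕ, ∀ m, N ≤ m → ∀ n : ℕ, |y m n - x n| ≤ ε) :
    ∀ ε : ℝ, 0 < ε → ∃ N : ℕ, ∀ m, N ≤ m → ∀ n : ℕ,
      |Tmap k n₃ r a p q f α γ (y m) n - Tmap k n₃ r a p q f α γ x n| ≤ ε := by
  intro ε hε
  have hγR : (0:ℝ) < (γ:ℝ) := by exact_mod_cast hγ0
  have hγR1 : (γ:ℝ) ≤ 1 := by exact_mod_cast hγ1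
  have hc1 : 1 ≤ ((γ:ℝ))⁻¹ := one_le_inv_iff₀.mpr ⟨hγR, hγR1⟩
  have hc0 : (0:ℝ) ≤ (γ:ℝ)⁻¹ := le_trans zero_le_one hc1
  have hα1R : 1 ≤ ((α:ℚ):ℝ) := by exact_mod_cast hα
  have hMd0 : 0 ≤ Md := le_trans (abs_nonneg (f 0)) (hMd 0 (by simpa using hd.le))
  have hdαb : ∀ u : ℝ, |u| ≤ d → |opow u α| ≤ d ^ ((α:ℚ):ℝ) := by
    intro u hu
    rw [abs_opow]
    exact Real.rpow_le_rpow (abs_nonneg u) hu (by linarith)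
  have hdα0 : (0:ℝ) ≤ d ^ ((α:ℚ):ℝ) := Real.rpow_nonneg hd.le _
  have hSa0 : 0 ≤ ∑' i, |a i| := tsum_nonneg fun i => abs_nonneg _
  have hSq0 : 0 ≤ ∑' i, |q i| := tsum_nonneg fun i => abs_nonneg _
  set Lα : ℝ := ((α:ℚ):ℝ) * d ^ (((α:ℚ):ℝ) - 1) with hLαdef
  have hLα0 : 0 ≤ Lα := by
    have : (0:ℝ) ≤ d ^ (((α:ℚ):ℝ) - 1) := Real.rpow_nonneg hd.le _
    nlinarith
  set CK : ℝ := (γ:ℝ)⁻¹ *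
    ((∑' i, |a i|) * Md + (∑' i, |q i|) * d ^ ((α:ℚ):ℝ)) ^ ((γ:ℝ)⁻¹ - 1) with hCKdef
  have hCK0 : 0 ≤ CK := by
    apply mul_nonneg hc0
    exact Real.rpow_nonneg (by positivity) _
  set Sra : ℝ := ∑' n, |1 / r n| ^ (γ:ℝ)⁻¹ * ∑' i, |a (n + i)| with hSradef
  set Srq : ℝ := ∑' n, |1 / r n| ^ (γ:ℝ)⁻¹ * ∑' i, |q (n + i)| with hSrqdef
  have hSra0 : 0 ≤ Sra := tsum_nonneg fun n =>
    mul_nonneg (Real.rpow_nonneg (abs_nonneg _) _) (tail_nonneg a n)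
  have hSrq0 : 0 ≤ Srq := tsum_nonneg fun n =>
    mul_nonneg (Real.rpow_nonneg (abs_nonneg _) _) (tail_nonneg q n)
  set εf : ℝ := ε / (3 * (1 + CK * Sra)) with hεfdef
  have hεf0 : 0 < εf := div_pos hε (by nlinarith)
  have hucf := (isCompact_Icc (a := -d) (b := d)).uniformContinuousOn_of_continuous
    (hf.continuous.continuousOn)
  rw [Metric.uniformContinuousOn_iff] at hucf
  obtain ⟨δf, hδf0, hδf⟩ := hucf εf hεf0
  set δ : ℝ := min (δf / 2) (min (ε / (3 * (1 + P))) (ε / (3 * (1 + CK * Lα * Srq))))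
    with hδdef
  have hδ0 : 0 < δ := by
    refine lt_min (by positivity) (lt_min (by positivity) ?_)
    apply div_pos hε
    nlinarith [mul_nonneg (mul_nonneg hCK0 hLα0) hSrq0]
  obtain ⟨N, hN⟩ := hconv δ hδ0
  refine ⟨N, fun m hm n => ?_⟩
  have hyx : ∀ i, |y m i - x i| ≤ δ := hN m hm
  by_cases hn : n₃ ≤ n
  swap
  · simp only [Tmap, if_neg hn]
    refine le_trans (hyx n) ?_
    have h2 : ε / (3 * (1 + P)) ≤ ε := by
      rw [div_le_iff₀ (by nlinarith : (0:ℝ) < 3 * (1 + P))]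
      nlinarith
    calc δ ≤ min (ε / (3 * (1 + P))) (ε / (3 * (1 + CK * Lα * Srq))) := min_le_right _ _
      _ ≤ ε / (3 * (1 + P)) := min_le_left _ _
      _ ≤ ε := h2
  · have hn₀n : n₀ ≤ n := by omega
    have hn₀nk : n₀ ≤ n - k := by omega
    have hfd : ∀ i, n₀ ≤ i → |f (y m i) - f (x i)| ≤ εf := by
      intro i hi
      have h1 : y m i ∈ Set.Icc (-d) d := Set.mem_Icc.2 (abs_le.1 (hy m i hi))
      have h2 : x i ∈ Set.Icc (-d) d := Set.mem_Icc.2 (abs_le.1 (hx i hi))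
      have hdist : dist (y m i) (x i) < δf := by
        rw [Real.dist_eq]
        calc |y m i - x i| ≤ δ := hyx i
          _ ≤ δf / 2 := min_le_left _ _
          _ < δf := by linarith
      have := hδf _ h1 _ h2 hdist
      rw [Real.dist_eq] at this
      exact this.le
    have hod : ∀ i, n₀ ≤ i → |opow (y m i) α - opow (x i) α| ≤ Lα * δ := by
      intro i hi
      refine le_trans (opow_lip hα1R (hy m i hi) (hx i hi)) ?_
      rw [hLαdef]
      exact mul_le_mul_of_nonneg_left (hyx i) (by rw [← hLαdef]; exact hLα0)
    have houts : ∀ z : ℕ → ℝ, (∀ i, n₀ ≤ i → |z i| ≤ d) →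
        Summable (fun j => opow (gmap r a q f α z (n + j)) γ⁻¹) := by
      intro z hz
      have hFsum : Summable (fun w => 2 ^ (γ:ℝ)⁻¹ *
          (((∑' i, |a i|) * Md) ^ ((γ:ℝ)⁻¹ - 1) * Md *
              (|1 / r w| ^ (γ:ℝ)⁻¹ * ∑' i, |a (w + i)|) +
           ((∑' i, |q i|) * d ^ ((α:ℚ):ℝ)) ^ ((γ:ℝ)⁻¹ - 1) * d ^ ((α:ℚ):ℝ) *
              (|1 / r w| ^ (γ:ℝ)⁻¹ * ∑' i, |q (w + i)|))) :=
        ((hra.mul_left _).add (hrq.mul_left _)).mul_left _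
      refine Summable.of_norm_bounded (hFsum.comp_injective (add_right_injective n)) ?_
      intro j
      rw [Real.norm_eq_abs]
      exact opow_gmap_bound hc1 ha hq hz hMd hdαb hMd0 hdα0 (le_trans hn₀n (Nat.le_add_right n j))
    have hsy := houts (y m) (hy m)
    have hsx := houts x hx
    set D : ℕ → ℝ := fun w => CK *
      (εf * (|1 / r w| ^ (γ:ℝ)⁻¹ * ∑' i, |a (w + i)|) +
       (Lα * δ) * (|1 / r w| ^ (γ:ℝ)⁻¹ * ∑' i, |q (w + i)|)) with hDdef
    have hDsum : Summable D := by
      rw [hDdef]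
      exact ((hra.mul_left εf).add (hrq.mul_left (Lα * δ))).mul_left CK
    have hDcomp : Summable (fun j => D (n + j)) :=
      hDsum.comp_injective (add_right_injective n)
    have hD0 : ∀ w, 0 ≤ D w := by
      intro w
      rw [hDdef]
      have h1 : (0:ℝ) ≤ |1 / r w| ^ (γ:ℝ)⁻¹ := Real.rpow_nonneg (abs_nonneg _) _
      have h2 := tail_nonneg a w
      have h3 := tail_nonneg q w
      have h4 : 0 ≤ Lα * δ := mul_nonneg hLα0 hδ0.le
      positivity
    have hterm : ∀ j : ℕ, ‖opow (gmap r a q f α (y m) (n + j)) γ⁻¹ -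
        opow (gmap r a q f α x (n + j)) γ⁻¹‖ ≤ D (n + j) := by
      intro j
      rw [Real.norm_eq_abs, hDdef]
      exact opow_gmap_diff hc1 ha hq hr (hy m) hx hMd hdαb hMd0 hdα0 hfd hod
        (le_trans hn₀n (Nat.le_add_right n j))
    have habs_sum : Summable (fun j => ‖opow (gmap r a q f α (y m) (n + j)) γ⁻¹ -
        opow (gmap r a q f α x (n + j)) γ⁻¹‖) :=
      hDcomp.of_nonneg_of_le (fun j => norm_nonneg _) hterm
    have hsum_tail : ∑' j, D (n + j) ≤ ∑' w, D w :=
      Summable.tsum_le_tsum_of_inj (fun j => n + j) (add_right_injective n)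
        (fun c _ => hD0 c) (fun j => le_rfl) hDcomp hDsum
    have hDval : ∑' w, D w = CK * (εf * Sra + (Lα * δ) * Srq) := by
      rw [hDdef, tsum_mul_left, Summable.tsum_add (hra.mul_left εf) (hrq.mul_left (Lα * δ)),
        tsum_mul_left, tsum_mul_left, hSradef, hSrqdef]
    have houtdiff : |(∑' j, opow (gmap r a q f α (y m) (n + j)) γ⁻¹) -
        (∑' j, opow (gmap r a q f α x (n + j)) γ⁻¹)| ≤
        CK * (εf * Sra + (Lα * δ) * Srq) := by
      rw [← Summable.tsum_sub hsy hsx, ← Real.norm_eq_abs]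
      calc ‖∑' j, (opow (gmap r a q f α (y m) (n + j)) γ⁻¹ -
            opow (gmap r a q f α x (n + j)) γ⁻¹)‖
          ≤ ∑' j, ‖opow (gmap r a q f α (y m) (n + j)) γ⁻¹ -
            opow (gmap r a q f α x (n + j)) γ⁻¹‖ := norm_tsum_le_tsum_norm habs_sum
        _ ≤ ∑' j, D (n + j) := Summable.tsum_le_tsum hterm habs_sum hDcomp
        _ ≤ ∑' w, D w := hsum_tail
        _ = CK * (εf * Sra + (Lα * δ) * Srq) := hDval
    rw [Tmap_eq hn, Tmap_eq hn]
    have hsplit : (-(p n * y m (n - k)) -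
          ∑' j, opow (gmap r a q f α (y m) (n + j)) γ⁻¹) -
        (-(p n * x (n - k)) - ∑' j, opow (gmap r a q f α x (n + j)) γ⁻¹) =
        p n * (x (n - k) - y m (n - k)) +
        ((∑' j, opow (gmap r a q f α x (n + j)) γ⁻¹) -
         (∑' j, opow (gmap r a q f α (y m) (n + j)) γ⁻¹)) := by ring
    rw [hsplit]
    have h1 : |p n * (x (n - k) - y m (n - k))| ≤ P * δ := by
      rw [abs_mul]
      refine mul_le_mul (hp n hn₀n) ?_ (abs_nonneg _) hP0
      rw [abs_sub_comm]
      exact hyx _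
    have h2 : |(∑' j, opow (gmap r a q f α x (n + j)) γ⁻¹) -
        (∑' j, opow (gmap r a q f α (y m) (n + j)) γ⁻¹)| ≤
        CK * (εf * Sra + (Lα * δ) * Srq) := by
      rw [abs_sub_comm]
      exact houtdiff
    have hPδ : P * δ ≤ ε / 3 := by
      have hδle : δ ≤ ε / (3 * (1 + P)) :=
        le_trans (min_le_right _ _) (min_le_left _ _)
      calc P * δ ≤ P * (ε / (3 * (1 + P))) := mul_le_mul_of_nonneg_left hδle hP0
        _ ≤ ε / 3 := aux_div hP0 hε
    have hεfb : CK * (εf * Sra) ≤ ε / 3 := by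
      have : CK * (εf * Sra) = (CK * Sra) * εf := by ring
      rw [this, hεfdef]
      exact aux_div (mul_nonneg hCK0 hSra0) hε
    have hδb : CK * ((Lα * δ) * Srq) ≤ ε / 3 := by
      have heq : CK * ((Lα * δ) * Srq) = (CK * Lα * Srq) * δ := by ring
      rw [heq]
      have hδle : δ ≤ ε / (3 * (1 + CK * Lα * Srq)) :=
        le_trans (min_le_right _ _) (min_le_right _ _)
      calc (CK * Lα * Srq) * δ ≤ (CK * Lα * Srq) * (ε / (3 * (1 + CK * Lα * Srq))) :=
            mul_le_mul_of_nonneg_left hδle (by positivity)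
        _ ≤ ε / 3 := aux_div (by positivity) hε
    calc |p n * (x (n - k) - y m (n - k)) +
          ((∑' j, opow (gmap r a q f α x (n + j)) γ⁻¹) -
           (∑' j, opow (gmap r a q f α (y m) (n + j)) γ⁻¹))| ≤
        |p n * (x (n - k) - y m (n - k))| +
          |(∑' j, opow (gmap r a q f α x (n + j)) γ⁻¹) -
           (∑' j, opow (gmap r a q f α (y m) (n + j)) γ⁻¹)| := abs_add_le _ _
      _ ≤ P * δ + CK * (εf * Sra + (Lα * δ) * Srq) := add_le_add h1 h2
      _ = P * δ + (CK * (εf * Sra) + CK * ((Lα * δ) * Srq)) := by ring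
      _ ≤ ε / 3 + (ε / 3 + ε / 3) := add_le_add hPδ (add_le_add hεfb hδb)
      _ = ε := by ring
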